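/- Let n < 1 and ν > (1 − n)/2. Then for all x > 0, ∫_x^∞ K_{ν+n}(t)/t^ν dt < (2(ν+n−1)/(2ν+n−1))·K_{ν+n−1}(x)/x^ν − ((n−1)/(2ν+n−1))·K_{ν+n−3}(x)/x^ν. -/

import Mathlib

open MeasureTheory Set Real

/-- Modified Bessel function of the second kind:
`K_ν(x) = ∫_0^∞ exp(−x cosh t) cosh(ν t) dt`. -/
noncomputable def besselK (ν x : ℝ) : ℝ :=
  ∫ t in Ioi (0 : ℝ), Real.exp (-(x * Real.cosh t)) * Real.cosh (ν * t)

-- step 1: basic inequalities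
lemma sq_half_le_cosh (t : ℝ) : t ^ 2 / 2 ≤ Real.cosh t := by
  have h := Real.cosh_sq (t / 2)
  have h2 : Real.cosh t = 2 * Real.sinh (t / 2) ^ 2 + 1 := by
    have := Real.cosh_two_mul (t / 2)
    rw [show 2 * (t / 2) = t by ring] at this
    nlinarith [Real.cosh_sq (t / 2)]
  have h3 : (t / 2) ^ 2 ≤ Real.sinh (t / 2) ^ 2 := by
    rcases le_or_gt 0 (t / 2) with hs | hs
    · have := Real.self_le_sinh_iff.2 hs
      nlinarith
    · have h4 : -(t/2) ≤ Real.sinh (-(t/2)) := Real.self_le_sinh_iff.2 (by linarith)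
      rw [Real.sinh_neg] at h4
      nlinarith
  nlinarith

lemma cosh_le_exp_abs (t : ℝ) : Real.cosh t ≤ Real.exp |t| := by
  rw [Real.cosh_eq]
  have h1 : Real.exp t ≤ Real.exp |t| := Real.exp_le_exp.2 (le_abs_self t)
  have h2 : Real.exp (-t) ≤ Real.exp |t| := Real.exp_le_exp.2 (neg_le_abs t)
  linarith

lemma abs_sinh_le_exp_abs (t : ℝ) : |Real.sinh t| ≤ Real.exp |t| := by
  rw [Real.sinh_eq, abs_div]
  have h1 : Real.exp t ≤ Real.exp |t| := Real.exp_le_exp.2 (le_abs_self t)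
  have h2 : Real.exp (-t) ≤ Real.exp |t| := Real.exp_le_exp.2 (neg_le_abs t)
  have := abs_sub (Real.exp t) (Real.exp (-t))
  rw [abs_of_pos (Real.exp_pos t), abs_of_pos (Real.exp_pos (-t))] at this
  rw [abs_of_pos (by norm_num : (0:ℝ) < 2)]
  linarith [Real.exp_pos t, Real.exp_pos (-t)]

lemma exp_arg_bound {x : ℝ} (hx : 0 < x) (c t : ℝ) :
    c * t - x * Real.cosh t ≤ (c + 1) ^ 2 / (2 * x) - t := by
  have h1 := sq_half_le_cosh t
  have h2 : 0 ≤ (x * t - (c + 1)) ^ 2 := sq_nonneg _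
  have h3 : x * (t ^ 2 / 2) ≤ x * Real.cosh t := by nlinarith
  rw [← sub_nonneg]
  have key : (c + 1) ^ 2 / (2 * x) - t - (c * t - x * Real.cosh t) =
      ((x * t - (c + 1)) ^ 2 / (2 * x)) + (x * Real.cosh t - x * (t ^ 2 / 2)) := by
    field_simp
    ring
  rw [key]
  have h4 : 0 ≤ (x * t - (c + 1)) ^ 2 / (2 * x) := by positivity
  linarith

lemma key_integrable {x : ℝ} (hx : 0 < x) (c : ℝ) :
    IntegrableOn (fun t => Real.exp (c * t - x * Real.cosh t)) (Ioi (0:ℝ)) := by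
  have hg : IntegrableOn (fun t => Real.exp ((c+1)^2/(2*x)) * Real.exp (-(1:ℝ) * t)) (Ioi (0:ℝ)) :=
    (exp_neg_integrableOn_Ioi 0 one_pos).const_mul _
  refine hg.mono' ?_ ?_
  · exact (Real.continuous_exp.comp (by continuity)).aestronglyMeasurable
  · filter_upwards with t
    rw [Real.norm_eq_abs, Real.abs_exp, ← Real.exp_add]
    apply Real.exp_le_exp.2
    have := exp_arg_bound hx c t
    linarith

lemma integrable_of_exp_bound {x : ℝ} (hx : 0 < x) (c : ℝ) {f : ℝ → ℝ}
    (hf : AEStronglyMeasurable f (volume.restrict (Ioi (0:ℝ))))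
    (hb : ∀ t ∈ Ioi (0:ℝ), |f t| ≤ Real.exp (c * t - x * Real.cosh t)) :
    IntegrableOn f (Ioi (0:ℝ)) := by
  refine (key_integrable hx c).mono' hf ?_
  filter_upwards [ae_restrict_mem measurableSet_Ioi] with t ht
  simpa using hb t ht

lemma integrand_integrable {x : ℝ} (hx : 0 < x) (a : ℝ) :
    IntegrableOn (fun t => Real.exp (-(x * Real.cosh t)) * Real.cosh (a * t)) (Ioi (0:ℝ)) := by
  refine integrable_of_exp_bound hx |a| ((Real.continuous_exp.comp (by continuity)).mul
    (Real.continuous_cosh.comp (by continuity))).aestronglyMeasurable ?_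
  intro t ht
  have ht' : (0:ℝ) < t := ht
  have h1 : Real.cosh (a * t) ≤ Real.exp (|a| * t) := by
    calc Real.cosh (a * t) ≤ Real.exp |a * t| := cosh_le_exp_abs _
    _ = Real.exp (|a| * t) := by rw [abs_mul, abs_of_pos ht']
  have h2 : (0:ℝ) < Real.exp (-(x * Real.cosh t)) := Real.exp_pos _
  rw [abs_of_nonneg (by positivity)]
  calc Real.exp (-(x * Real.cosh t)) * Real.cosh (a * t)
      ≤ Real.exp (-(x * Real.cosh t)) * Real.exp (|a| * t) :=
        mul_le_mul_of_nonneg_left h1 h2.le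
    _ = Real.exp (|a| * t - x * Real.cosh t) := by rw [← Real.exp_add]; ring_nf

lemma besselK_pos (ν : ℝ) {x : ℝ} (hx : 0 < x) : 0 < besselK ν x := by
  rw [besselK]
  rw [setIntegral_pos_iff_support_of_nonneg_ae]
  · have : (Function.support fun t => Real.exp (-(x * Real.cosh t)) * Real.cosh (ν * t)) = univ := by
      ext t
      simp only [Function.mem_support, mem_univ, iff_true]
      positivity
    rw [this, univ_inter]
    simp [Real.volume_Ioi]
  · filter_upwards with t
    positivity
  · exact integrand_integrable hx ν

lemma besselK_le_of_le (ν : ℝ) {y t : ℝ} (hy : 0 < y) (hyt : y ≤ t) :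
    besselK ν t ≤ Real.exp (y - t) * besselK ν y := by
  have ht : 0 < t := lt_of_lt_of_le hy hyt
  rw [besselK, besselK, ← integral_const_mul]
  refine setIntegral_mono_on (integrand_integrable ht ν)
    ((integrand_integrable hy ν).const_mul _) measurableSet_Ioi ?_
  intro s _
  have hc : 1 ≤ Real.cosh s := Real.one_le_cosh s
  have h1 : Real.exp (-(t * Real.cosh s)) ≤ Real.exp (y - t) * Real.exp (-(y * Real.cosh s)) := by
    rw [← Real.exp_add, Real.exp_le_exp]
    nlinarith
  have h2 : 0 ≤ Real.cosh (ν * s) := (Real.cosh_pos _).le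
  calc Real.exp (-(t * Real.cosh s)) * Real.cosh (ν * s)
      ≤ (Real.exp (y - t) * Real.exp (-(y * Real.cosh s))) * Real.cosh (ν * s) :=
        mul_le_mul_of_nonneg_right h1 h2
    _ = Real.exp (y - t) * (Real.exp (-(y * Real.cosh s)) * Real.cosh (ν * s)) := by ring

lemma cosh_mul_cosh (a t : ℝ) :
    Real.cosh t * Real.cosh (a * t) =
      (Real.cosh ((a + 1) * t) + Real.cosh ((a - 1) * t)) / 2 := by
  rw [show (a + 1) * t = a * t + t by ring, show (a - 1) * t = a * t - t by ring,
    Real.cosh_add, Real.cosh_sub]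
  ring

lemma sinh_mul_sinh (a t : ℝ) :
    Real.sinh t * Real.sinh (a * t) =
      (Real.cosh ((a + 1) * t) - Real.cosh ((a - 1) * t)) / 2 := by
  rw [show (a + 1) * t = a * t + t by ring, show (a - 1) * t = a * t - t by ring,
    Real.cosh_add, Real.cosh_sub]
  ring

lemma hasDerivAt_besselK (ν : ℝ) {x : ℝ} (hx : 0 < x) :
    HasDerivAt (besselK ν) (-((besselK (ν - 1) x + besselK (ν + 1) x) / 2)) x := by
  have main := hasDerivAt_integral_of_dominated_loc_of_deriv_le
    (F := fun y t => Real.exp (-(y * Real.cosh t)) * Real.cosh (ν * t))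
    (F' := fun y t => -(Real.cosh t * (Real.exp (-(y * Real.cosh t)) * Real.cosh (ν * t))))
    (μ := volume.restrict (Ioi (0:ℝ))) (x₀ := x)
    (bound := fun t => Real.exp ((1 + |ν|) * t - x / 2 * Real.cosh t))
    (Metric.ball_mem_nhds x (half_pos hx))
    (Filter.Eventually.of_forall fun y =>
      ((Real.continuous_exp.comp (by continuity)).mul
        (Real.continuous_cosh.comp (by continuity))).aestronglyMeasurable)
    (integrand_integrable hx ν)
    ((Real.continuous_cosh.mul ((Real.continuous_exp.comp (by continuity)).mul
        (Real.continuous_cosh.comp (by continuity)))).neg.aestronglyMeasurable)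
    ?_ ((key_integrable (half_pos hx) (1 + |ν|)).mono_set subset_rfl) ?_
  · -- identify the derivative value
    have hval : (∫ t in Ioi (0:ℝ),
        -(Real.cosh t * (Real.exp (-(x * Real.cosh t)) * Real.cosh (ν * t))))
        = -((besselK (ν - 1) x + besselK (ν + 1) x) / 2) := by
      have heq : ∀ t : ℝ,
          -(Real.cosh t * (Real.exp (-(x * Real.cosh t)) * Real.cosh (ν * t)))
          = (-(1/2)) * (Real.exp (-(x * Real.cosh t)) * Real.cosh ((ν + 1) * t))
            + (-(1/2)) * (Real.exp (-(x * Real.cosh t)) * Real.cosh ((ν - 1) * t)) := by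
        intro t
        have := cosh_mul_cosh ν t
        nlinarith [this, Real.exp_pos (-(x * Real.cosh t))]
      rw [MeasureTheory.integral_congr_ae (Filter.Eventually.of_forall heq),
        MeasureTheory.integral_add (((integrand_integrable hx (ν+1)).const_mul _))
          (((integrand_integrable hx (ν-1)).const_mul _)),
        MeasureTheory.integral_const_mul, MeasureTheory.integral_const_mul]
      rw [besselK, besselK]
      ring
    rw [← hval]
    exact main.2
  · -- bound
    filter_upwards [ae_restrict_mem measurableSet_Ioi] with t ht y hy
    have ht' : (0:ℝ) < t := ht
    rw [Real.norm_eq_abs, abs_neg, abs_of_nonneg (by positivity)]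
    have hy2 : x / 2 < y := by
      rw [Metric.mem_ball, Real.dist_eq, abs_lt] at hy
      linarith [hy.1]
    have h1 : Real.exp (-(y * Real.cosh t)) ≤ Real.exp (-(x / 2 * Real.cosh t)) := by
      rw [Real.exp_le_exp]
      have := Real.one_le_cosh t
      nlinarith
    have h2 : Real.cosh t ≤ Real.exp t := by
      simpa [abs_of_pos ht'] using cosh_le_exp_abs t
    have h3 : Real.cosh (ν * t) ≤ Real.exp (|ν| * t) := by
      calc Real.cosh (ν * t) ≤ Real.exp |ν * t| := cosh_le_exp_abs _
      _ = Real.exp (|ν| * t) := by rw [abs_mul, abs_of_pos ht']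
    calc Real.cosh t * (Real.exp (-(y * Real.cosh t)) * Real.cosh (ν * t))
        ≤ Real.exp t * (Real.exp (-(x / 2 * Real.cosh t)) * Real.exp (|ν| * t)) := by
          apply mul_le_mul h2 (mul_le_mul h1 h3 (Real.cosh_pos _).le (Real.exp_pos _).le)
            (by positivity) (Real.exp_pos _).le
      _ = Real.exp ((1 + |ν|) * t - x / 2 * Real.cosh t) := by
          rw [← Real.exp_add, ← Real.exp_add]; ring_nf
  · -- differentiability in the parameter
    filter_upwards with t y _
    have h : HasDerivAt (fun y : ℝ => Real.exp (-(y * Real.cosh t)))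
        (-Real.cosh t * Real.exp (-(y * Real.cosh t))) y := by
      have h0 : HasDerivAt (fun y : ℝ => -(y * Real.cosh t)) (-Real.cosh t) y := by
        exact ((hasDerivAt_id y).mul_const (Real.cosh t)).neg.congr_deriv (by simp)
      simpa [mul_comm] using h0.exp
    have := h.mul_const (Real.cosh (ν * t))
    refine this.congr_deriv ?_
    ring

lemma besselK_recurrence (μ : ℝ) {x : ℝ} (hx : 0 < x) :
    2 * μ * besselK μ x = x * (besselK (μ + 1) x - besselK (μ - 1) x) := by
  set g : ℝ → ℝ := fun t => Real.exp (-(x * Real.cosh t)) * Real.sinh (μ * t) with hg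
  set g' : ℝ → ℝ := fun t =>
    μ * (Real.exp (-(x * Real.cosh t)) * Real.cosh (μ * t))
    - (x / 2) * (Real.exp (-(x * Real.cosh t)) * Real.cosh ((μ + 1) * t))
    + (x / 2) * (Real.exp (-(x * Real.cosh t)) * Real.cosh ((μ - 1) * t)) with hg'
  have hderiv : ∀ t : ℝ, HasDerivAt g (g' t) t := by
    intro t
    have h1 : HasDerivAt (fun t : ℝ => Real.exp (-(x * Real.cosh t)))
        (Real.exp (-(x * Real.cosh t)) * (-(x * Real.sinh t))) t := by
      exact ((Real.hasDerivAt_cosh t).const_mul x).neg.exp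
    have h2 : HasDerivAt (fun t : ℝ => Real.sinh (μ * t)) (Real.cosh (μ * t) * μ) t := by
      exact (Real.hasDerivAt_sinh (μ * t)).comp t (by simpa using (hasDerivAt_id t).const_mul μ)
    have := h1.mul h2
    refine this.congr_deriv ?_
    have hs := sinh_mul_sinh μ t
    rw [hg']
    beta_reduce
    linear_combination (-(x * Real.exp (-(x * Real.cosh t)))) * hs
  have hint : IntegrableOn g' (Ioi (0:ℝ)) := by
    exact (((integrand_integrable hx μ).const_mul μ).sub
      ((integrand_integrable hx (μ+1)).const_mul (x/2))).add
      ((integrand_integrable hx (μ-1)).const_mul (x/2))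
  have htend : Filter.Tendsto g Filter.atTop (nhds 0) := by
    have hb : ∀ᶠ t in Filter.atTop, |g t| ≤ Real.exp ((|μ|+1)^2/(2*x)) * Real.exp (-t) := by
      filter_upwards [Filter.eventually_gt_atTop 0] with t ht
      rw [hg, abs_mul, Real.abs_exp]
      have h1 : |Real.sinh (μ * t)| ≤ Real.exp (|μ| * t) := by
        calc |Real.sinh (μ * t)| ≤ Real.exp |μ * t| := abs_sinh_le_exp_abs _
        _ = Real.exp (|μ| * t) := by rw [abs_mul, abs_of_pos ht]
      calc Real.exp (-(x * Real.cosh t)) * |Real.sinh (μ * t)|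
          ≤ Real.exp (-(x * Real.cosh t)) * Real.exp (|μ| * t) :=
            mul_le_mul_of_nonneg_left h1 (Real.exp_pos _).le
        _ = Real.exp (|μ| * t - x * Real.cosh t) := by rw [← Real.exp_add]; ring_nf
        _ ≤ Real.exp ((|μ|+1)^2/(2*x)) * Real.exp (-t) := by
            rw [← Real.exp_add, Real.exp_le_exp]
            linarith [exp_arg_bound hx |μ| t]
    have hlim : Filter.Tendsto (fun t => Real.exp ((|μ|+1)^2/(2*x)) * Real.exp (-t))
        Filter.atTop (nhds 0) := by
      simpa using (Real.tendsto_exp_neg_atTop_nhds_zero).const_mul (Real.exp ((|μ|+1)^2/(2*x)))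
    have hlow : ∀ᶠ t in Filter.atTop, -(Real.exp ((|μ|+1)^2/(2*x)) * Real.exp (-t)) ≤ g t := by
      filter_upwards [hb] with t ht
      have := abs_le.1 ht
      linarith [this.1]
    have hup : ∀ᶠ t in Filter.atTop, g t ≤ Real.exp ((|μ|+1)^2/(2*x)) * Real.exp (-t) := by
      filter_upwards [hb] with t ht
      exact (abs_le.1 ht).2
    exact tendsto_of_tendsto_of_tendsto_of_le_of_le' (by simpa using hlim.neg) hlim hlow hup
  have hFTC := MeasureTheory.integral_Ioi_of_hasDerivAt_of_tendsto
    (f := g) (f' := g') (a := 0) (m := 0)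
    (hderiv 0).continuousAt.continuousWithinAt
    (fun t _ => hderiv t) hint htend
  have hg0 : g 0 = 0 := by simp [hg]
  rw [hg0, sub_zero] at hFTC
  have hsplit : ∫ t in Ioi (0:ℝ), g' t
      = μ * besselK μ x - (x/2) * besselK (μ+1) x + (x/2) * besselK (μ-1) x := by
    have hP := (integrand_integrable hx μ).const_mul μ
    have hQ := (integrand_integrable hx (μ+1)).const_mul (x/2)
    have hR := (integrand_integrable hx (μ-1)).const_mul (x/2)
    calc ∫ t in Ioi (0:ℝ), g' t
        = (∫ t in Ioi (0:ℝ), (μ * (Real.exp (-(x * Real.cosh t)) * Real.cosh (μ * t))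
              - x / 2 * (Real.exp (-(x * Real.cosh t)) * Real.cosh ((μ + 1) * t))))
          + ∫ t in Ioi (0:ℝ), x / 2 * (Real.exp (-(x * Real.cosh t)) * Real.cosh ((μ - 1) * t)) :=
          MeasureTheory.integral_add (hP.sub hQ) hR
      _ = ((∫ t in Ioi (0:ℝ), μ * (Real.exp (-(x * Real.cosh t)) * Real.cosh (μ * t)))
              - ∫ t in Ioi (0:ℝ), x / 2 * (Real.exp (-(x * Real.cosh t)) * Real.cosh ((μ + 1) * t)))
          + ∫ t in Ioi (0:ℝ), x / 2 * (Real.exp (-(x * Real.cosh t)) * Real.cosh ((μ - 1) * t)) := by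
          rw [MeasureTheory.integral_sub hP hQ]
      _ = μ * besselK μ x - x / 2 * besselK (μ + 1) x + x / 2 * besselK (μ - 1) x := by
          rw [MeasureTheory.integral_const_mul, MeasureTheory.integral_const_mul,
            MeasureTheory.integral_const_mul]
          rfl
  rw [hsplit] at hFTC
  linarith

lemma besselK_continuousAt (ν : ℝ) {x : ℝ} (hx : 0 < x) : ContinuousAt (besselK ν) x :=
  (hasDerivAt_besselK ν hx).continuousAt

lemma integrableOn_besselK_div (μ p : ℝ) (hp : 0 ≤ p) {x : ℝ} (hx : 0 < x) :
    IntegrableOn (fun t => besselK μ t / t ^ p) (Ioi x) := by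
  have hmeas : AEStronglyMeasurable (fun t => besselK μ t / t ^ p)
      (volume.restrict (Ioi x)) := by
    apply ContinuousOn.aestronglyMeasurable _ measurableSet_Ioi
    intro t ht
    have ht' : 0 < t := lt_trans hx ht
    exact ((besselK_continuousAt μ ht').continuousWithinAt.div
      ((Real.continuousAt_rpow_const t p (Or.inl ht'.ne')).continuousWithinAt)
      (by positivity))
  set C : ℝ := Real.exp x * besselK μ x / x ^ p with hC
  refine ((exp_neg_integrableOn_Ioi x one_pos).const_mul C).mono' hmeas ?_
  filter_upwards [ae_restrict_mem measurableSet_Ioi] with t ht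
  have ht' : 0 < t := lt_trans hx ht
  have hKpos : 0 < besselK μ t := besselK_pos μ ht'
  have hle : besselK μ t ≤ Real.exp (x - t) * besselK μ x := besselK_le_of_le μ hx (le_of_lt ht)
  have hpow : x ^ p ≤ t ^ p := Real.rpow_le_rpow hx.le (le_of_lt ht) hp
  have hxp : (0:ℝ) < x ^ p := Real.rpow_pos_of_pos hx p
  have htp : (0:ℝ) < t ^ p := Real.rpow_pos_of_pos ht' p
  rw [Real.norm_eq_abs, abs_of_pos (by positivity)]
  have hKx : 0 ≤ besselK μ x := (besselK_pos μ hx).le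
  have h1 : besselK μ t / t ^ p ≤ (Real.exp (x - t) * besselK μ x) / x ^ p :=
    div_le_div₀ (by positivity) hle hxp hpow
  have h2 : Real.exp (x - t) = Real.exp x * Real.exp (-1 * t) := by
    rw [← Real.exp_add]; ring_nf
  calc besselK μ t / t ^ p ≤ (Real.exp (x - t) * besselK μ x) / x ^ p := h1
    _ = C * Real.exp (-1 * t) := by rw [hC, h2]; ring

lemma integral_besselK_div_pos (μ p : ℝ) (hp : 0 ≤ p) {x : ℝ} (hx : 0 < x) :
    0 < ∫ t in Ioi x, besselK μ t / t ^ p := by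
  rw [setIntegral_pos_iff_support_of_nonneg_ae]
  · have hsub : Ioi x ⊆ (Function.support fun t => besselK μ t / t ^ p) ∩ Ioi x := by
      intro t ht
      have ht' : 0 < t := lt_trans hx ht
      refine ⟨?_, ht⟩
      have := besselK_pos μ ht'
      have := Real.rpow_pos_of_pos ht' p
      simp only [Function.mem_support]
      positivity
    refine lt_of_lt_of_le ?_ (measure_mono hsub)
    simp [Real.volume_Ioi]
  · filter_upwards [ae_restrict_mem measurableSet_Ioi] with t ht
    have ht' : 0 < t := lt_trans hx ht
    have := (besselK_pos μ ht').le
    positivity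
  · exact integrableOn_besselK_div μ p hp hx

lemma hasDerivAt_G (ν n : ℝ) (hd : 2 * ν + n - 1 ≠ 0) {t : ℝ} (ht : 0 < t) :
    HasDerivAt (fun s => (2 * (ν + n - 1) / (2 * ν + n - 1)) * (besselK (ν + n - 1) s / s ^ ν)
        + ((1 - n) / (2 * ν + n - 1)) * (besselK (ν + n - 3) s / s ^ ν))
      (-(besselK (ν + n) t / t ^ ν
         + ((1 - n) * (3 - n) / (2 * ν + n - 1)) * (besselK (ν + n - 3) t / t ^ (ν + 1)))) t := by
  have hpne : t ^ ν ≠ 0 := (Real.rpow_pos_of_pos ht ν).ne'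
  have h1 := hasDerivAt_besselK (ν + n - 1) ht
  rw [show ν + n - 1 - 1 = ν + n - 2 by ring, show ν + n - 1 + 1 = ν + n by ring] at h1
  have h3 := hasDerivAt_besselK (ν + n - 3) ht
  rw [show ν + n - 3 - 1 = ν + n - 4 by ring, show ν + n - 3 + 1 = ν + n - 2 by ring] at h3
  have hpow : HasDerivAt (fun s : ℝ => s ^ ν) (ν * t ^ (ν - 1)) t :=
    Real.hasDerivAt_rpow_const (Or.inl ht.ne')
  have hq1 := h1.div hpow hpne
  have hq3 := h3.div hpow hpne
  have hcomb := (hq1.const_mul (2 * (ν + n - 1) / (2 * ν + n - 1))).add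
    (hq3.const_mul ((1 - n) / (2 * ν + n - 1)))
  refine hcomb.congr_deriv ?_
  -- recurrences
  have R1 := besselK_recurrence (ν + n - 1) ht
  rw [show ν + n - 1 + 1 = ν + n by ring, show ν + n - 1 - 1 = ν + n - 2 by ring] at R1
  have R3 := besselK_recurrence (ν + n - 3) ht
  rw [show ν + n - 3 + 1 = ν + n - 2 by ring, show ν + n - 3 - 1 = ν + n - 4 by ring] at R3
  have hK2 : besselK (ν + n) t
      = besselK (ν + n - 2) t + 2 * (ν + n - 1) * besselK (ν + n - 1) t / t := by
    field_simp
    linarith [R1]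
  have hK4 : besselK (ν + n - 4) t
      = besselK (ν + n - 2) t - 2 * (ν + n - 3) * besselK (ν + n - 3) t / t := by
    field_simp
    linarith [R3]
  have hrs : t ^ (ν - 1) = t ^ ν / t := by
    rw [Real.rpow_sub ht, Real.rpow_one]
  have hra : t ^ (ν + 1) = t ^ ν * t := by
    rw [Real.rpow_add ht, Real.rpow_one]
  rw [hK2, hK4, hrs, hra]
  field_simp
  ring

lemma tendsto_besselK_div (μ p : ℝ) (hp : 0 ≤ p) :
    Filter.Tendsto (fun t => besselK μ t / t ^ p) Filter.atTop (nhds 0) := by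
  have hb : ∀ᶠ t in Filter.atTop, |besselK μ t / t ^ p| ≤ (Real.exp 1 * besselK μ 1) * Real.exp (-t) := by
    filter_upwards [Filter.eventually_ge_atTop 1] with t ht
    have ht0 : (0:ℝ) < t := lt_of_lt_of_le one_pos ht
    have hK := besselK_pos μ ht0
    have htp : (1:ℝ) ≤ t ^ p := Real.one_le_rpow ht hp
    have hle : besselK μ t ≤ Real.exp (1 - t) * besselK μ 1 := besselK_le_of_le μ one_pos ht
    rw [abs_of_pos (by positivity)]
    have h1 : besselK μ t / t ^ p ≤ besselK μ t / 1 := by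
      apply div_le_div_of_nonneg_left hK.le one_pos htp
    have h2 : Real.exp (1 - t) = Real.exp 1 * Real.exp (-t) := by
      rw [← Real.exp_add]; ring_nf
    rw [div_one] at h1
    calc besselK μ t / t ^ p ≤ besselK μ t := h1
      _ ≤ Real.exp (1 - t) * besselK μ 1 := hle
      _ = (Real.exp 1 * besselK μ 1) * Real.exp (-t) := by rw [h2]; ring
  have hlim : Filter.Tendsto (fun t => (Real.exp 1 * besselK μ 1) * Real.exp (-t))
      Filter.atTop (nhds 0) := by
    simpa using Real.tendsto_exp_neg_atTop_nhds_zero.const_mul (Real.exp 1 * besselK μ 1)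
  refine tendsto_of_tendsto_of_tendsto_of_le_of_le' (g := fun t => -((Real.exp 1 * besselK μ 1) * Real.exp (-t)))
    (by simpa using hlim.neg) hlim ?_ ?_
  · filter_upwards [hb] with t ht; linarith [(abs_le.1 ht).1]
  · filter_upwards [hb] with t ht; exact (abs_le.1 ht).2

theorem stmt_3 (ν n : ℝ) (hn : n < 1) (hν : ν > (1 - n) / 2) :
    ∀ x : ℝ, 0 < x →
      (∫ t in Ioi x, besselK (ν + n) t / t ^ ν) <
        (2 * (ν + n - 1) / (2 * ν + n - 1)) * (besselK (ν + n - 1) x / x ^ ν)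
          - ((n - 1) / (2 * ν + n - 1)) * (besselK (ν + n - 3) x / x ^ ν) := by
  intro x hx
  have hν0 : 0 < ν := by linarith
  have hD : 0 < 2 * ν + n - 1 := by linarith
  have hc : 0 < (1 - n) * (3 - n) / (2 * ν + n - 1) := by
    apply div_pos (by nlinarith) hD
  set c : ℝ := (1 - n) * (3 - n) / (2 * ν + n - 1) with hcdef
  set G : ℝ → ℝ := fun s => (2 * (ν + n - 1) / (2 * ν + n - 1)) * (besselK (ν + n - 1) s / s ^ ν)
      + ((1 - n) / (2 * ν + n - 1)) * (besselK (ν + n - 3) s / s ^ ν) with hGdef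
  have hI1 : IntegrableOn (fun t => besselK (ν + n) t / t ^ ν) (Ioi x) :=
    integrableOn_besselK_div (ν + n) ν hν0.le hx
  have hI2 : IntegrableOn (fun t => besselK (ν + n - 3) t / t ^ (ν + 1)) (Ioi x) :=
    integrableOn_besselK_div (ν + n - 3) (ν + 1) (by linarith) hx
  have hint : IntegrableOn
      (fun t => -(besselK (ν + n) t / t ^ ν + c * (besselK (ν + n - 3) t / t ^ (ν + 1))))
      (Ioi x) := (hI1.add (hI2.const_mul c)).neg
  have htend : Filter.Tendsto G Filter.atTop (nhds 0) := by
    rw [hGdef]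
    have h1 := (tendsto_besselK_div (ν + n - 1) ν hν0.le).const_mul
      (2 * (ν + n - 1) / (2 * ν + n - 1))
    have h2 := (tendsto_besselK_div (ν + n - 3) ν hν0.le).const_mul ((1 - n) / (2 * ν + n - 1))
    simpa using h1.add h2
  have hFTC := MeasureTheory.integral_Ioi_of_hasDerivAt_of_tendsto
    (f := G) (a := x) (m := 0)
    (f' := fun t => -(besselK (ν + n) t / t ^ ν + c * (besselK (ν + n - 3) t / t ^ (ν + 1))))
    (hasDerivAt_G ν n hD.ne' hx).continuousAt.continuousWithinAt
    (fun t ht => hasDerivAt_G ν n hD.ne' (lt_trans hx ht)) hint htend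
  rw [zero_sub] at hFTC
  have hsplit : ∫ t in Ioi x,
      -(besselK (ν + n) t / t ^ ν + c * (besselK (ν + n - 3) t / t ^ (ν + 1)))
      = -((∫ t in Ioi x, besselK (ν + n) t / t ^ ν)
          + c * ∫ t in Ioi x, besselK (ν + n - 3) t / t ^ (ν + 1)) := by
    rw [MeasureTheory.integral_neg, MeasureTheory.integral_add hI1 (hI2.const_mul c),
      MeasureTheory.integral_const_mul]
  rw [hsplit, neg_inj] at hFTC
  have hI2pos : 0 < ∫ t in Ioi x, besselK (ν + n - 3) t / t ^ (ν + 1) :=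
    integral_besselK_div_pos (ν + n - 3) (ν + 1) (by linarith) hx
  have hGx : G x = (2 * (ν + n - 1) / (2 * ν + n - 1)) * (besselK (ν + n - 1) x / x ^ ν)
      - ((n - 1) / (2 * ν + n - 1)) * (besselK (ν + n - 3) x / x ^ ν) := by
    rw [hGdef]; ring
  nlinarith [hFTC, hGx, mul_pos hc hI2pos]
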